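/- Let θ ∈ (0,1/2). For every complex ω with Im(ω) ≥ 0, setting α = (5−iω)/2, the following Fourier–Laplace transform identity holds: ∫_0^∞ e^{iωv} · e^{−3v} · [ (e^{2v}+√(e^{4v}−1))^{θ} − (e^{2v}−√(e^{4v}−1))^{θ} ] dv = (θ/√2) · 2^{−iω/2} · Γ((3+2θ−iω)/4) · Γ((3−2θ−iω)/4) / Γ((5−iω)/2), where the integral converges absolutely (the integrand is O(e^{(2θ−3)v}) as v → ∞). -/

import Mathlib

open Real MeasureTheory Filter Topology

lemma cpowR {x : ℝ} (hx : 0 < x) (z : ℂ) :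
    (x:ℂ)^z = Complex.exp (z * (Real.log x : ℂ)) := by
  rw [Complex.cpow_def_of_ne_zero (by exact_mod_cast hx.ne'), Complex.ofReal_log hx.le, mul_comm]

lemma ofRealE {x : ℝ} (hx : 0 < x) : (x : ℂ) = Complex.exp ((Real.log x : ℝ) : ℂ) := by
  rw [← Complex.ofReal_exp, Real.exp_log hx]

theorem hpt_aux (θ : ℝ) (ω : ℂ)
    (μ p q : ℂ) (hμdef : μ = (5 - Complex.I*ω)/2)
    (hpdef : p = (3 - 2*(θ:ℂ) - Complex.I*ω)/4)
    (hqdef : q = (3 + 2*(θ:ℂ) - Complex.I*ω)/4)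
    (c : ℂ) (hcdef : c = Complex.exp ((μ - 3) * ((Real.log 2 : ℝ):ℂ)))
    (v : ℝ) (hv0 : 0 < v) :
    |2*(Real.exp (2*v) - Real.sqrt (Real.exp (4*v) - 1))^1 *
        (Real.exp (2*v)*2 - Real.exp (4*v)*4/(2*Real.sqrt (Real.exp (4*v) - 1)))| •
      (c * ((((Real.exp (2*v) - Real.sqrt (Real.exp (4*v) - 1))^2 : ℝ):ℂ)^(p-1)
          - (((Real.exp (2*v) - Real.sqrt (Real.exp (4*v) - 1))^2 : ℝ):ℂ)^(q-1)
          - (((Real.exp (2*v) - Real.sqrt (Real.exp (4*v) - 1))^2 : ℝ):ℂ)^p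
          + (((Real.exp (2*v) - Real.sqrt (Real.exp (4*v) - 1))^2 : ℝ):ℂ)^q)
        * ((1 + (Real.exp (2*v) - Real.sqrt (Real.exp (4*v) - 1))^2 : ℝ):ℂ)^(-μ))
    = Complex.exp (Complex.I * ω * (v : ℂ)) * ((Real.exp (-3 * v) : ℝ) : ℂ) *
        (((Real.exp (2 * v) + Real.sqrt (Real.exp (4 * v) - 1)) ^ θ -
            (Real.exp (2 * v) - Real.sqrt (Real.exp (4 * v) - 1)) ^ θ : ℝ) : ℂ) := by
  have h41 : 1 < Real.exp (4*v) := by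
    have := Real.exp_lt_exp.2 (show (0:ℝ) < 4*v by linarith); simpa using this
  have hs1 : 1 < Real.exp (2*v) := by
    have := Real.exp_lt_exp.2 (show (0:ℝ) < 2*v by linarith); simpa using this
  set s := Real.exp (2*v) with hs
  set r := Real.sqrt (Real.exp (4*v) - 1) with hr
  have h4 : Real.exp (4*v) = s^2 := by
    rw [hs, sq, ← Real.exp_add]; congr 1; ring
  have hr2 : r^2 = s^2 - 1 := by
    rw [hr, Real.sq_sqrt (by linarith : (0:ℝ) ≤ Real.exp (4*v) - 1), h4]
  have hr0 : 0 < r := Real.sqrt_pos.2 (by linarith)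
  set u := s - r with hu
  have hru : r < s := by nlinarith
  have hu0 : 0 < u := by rw [hu]; linarith
  have hu1 : u < 1 := by nlinarith
  have h1u2 : 0 < 1 - u^2 := by nlinarith
  have hsum : u * (s + r) = 1 := by rw [hu]; linear_combination -hr2
  have hse : s = (1+u^2)/(2*u) := by
    rw [eq_div_iff (by positivity), hu]; linear_combination -hr2
  have hre : r = (1-u^2)/(2*u) := by
    rw [eq_div_iff (by positivity), hu]; linear_combination -hr2
  have hDval : 2*u^1 * (s*2 - s^2*4/(2*r)) = -(4*u^2*(1+u^2)/(1-u^2)) := by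
    rw [hse, hre]
    field_simp
    ring
  rw [h4, hDval, abs_neg, abs_of_pos (div_pos (by positivity) h1u2)]
  have hsr_inv : s + r = u⁻¹ := by
    field_simp
    linear_combination hsum
  have hbr : ((s + r)^θ - u^θ : ℝ)
      = Real.exp (Real.log u * (-θ)) - Real.exp (Real.log u * θ) := by
    rw [hsr_inv, Real.rpow_def_of_pos (inv_pos.2 hu0), Real.rpow_def_of_pos hu0, Real.log_inv]
    ring_nf
  rw [hbr]
  have hlogu2 : Real.log (u^2) = 2 * Real.log u := by
    rw [Real.log_pow]; push_cast; ring
  have hcp2 : ∀ z : ℂ, ((u^2 : ℝ):ℂ)^z = Complex.exp (z * (2*((Real.log u : ℝ):ℂ))) := by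
    intro z
    rw [cpowR (by positivity), hlogu2]
    push_cast
    ring_nf
  rw [hcp2 (p-1), hcp2 (q-1), hcp2 p, hcp2 q]
  have hfac : Complex.exp ((p-1)*(2*((Real.log u : ℝ):ℂ))) - Complex.exp ((q-1)*(2*((Real.log u : ℝ):ℂ)))
      - Complex.exp (p*(2*((Real.log u : ℝ):ℂ))) + Complex.exp (q*(2*((Real.log u : ℝ):ℂ)))
      = (1 - Complex.exp (2*((Real.log u : ℝ):ℂ))) *
        (Complex.exp ((p-1)*(2*((Real.log u : ℝ):ℂ))) - Complex.exp ((q-1)*(2*((Real.log u : ℝ):ℂ)))) := by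
    rw [show p*(2*((Real.log u : ℝ):ℂ)) = (p-1)*(2*((Real.log u : ℝ):ℂ)) + 2*((Real.log u : ℝ):ℂ) by ring,
        show q*(2*((Real.log u : ℝ):ℂ)) = (q-1)*(2*((Real.log u : ℝ):ℂ)) + 2*((Real.log u : ℝ):ℂ) by ring,
        Complex.exp_add, Complex.exp_add]
    ring
  rw [hfac]
  have hexp2l : (1 : ℂ) - Complex.exp (2*((Real.log u : ℝ):ℂ)) = ((1 - u^2 : ℝ):ℂ) := by
    have h' : Complex.exp (2*((Real.log u : ℝ):ℂ)) = ((u^2 : ℝ):ℂ) := by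
      rw [ofRealE (by positivity : (0:ℝ) < u^2), hlogu2]
      push_cast
      ring_nf
    rw [h']
    push_cast
    ring
  rw [hexp2l]
  have hK : ((1 + u^2 : ℝ):ℂ)^(-μ) = Complex.exp (-μ * ((Real.log (1+u^2) : ℝ):ℂ)) :=
    cpowR (by positivity) _
  rw [hK]
  have hexpand : ∀ (c₁ k e1 e2 a b : ℂ),
      a * (c₁ * (b * (e1 - e2)) * k) = (a*b)*c₁*k*e1 - (a*b)*c₁*k*e2 := by
    intros; ring
  rw [Complex.real_smul, hexpand]
  have hcoef : ((4*u^2*(1+u^2)/(1-u^2) : ℝ):ℂ) * ((1-u^2 : ℝ):ℂ)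
      = Complex.exp (2*((Real.log 2 : ℝ):ℂ) + 2*((Real.log u : ℝ):ℂ) + ((Real.log (1+u^2) : ℝ):ℂ)) := by
    rw [← Complex.ofReal_mul, div_mul_cancel₀ _ h1u2.ne',
      ofRealE (by positivity : (0:ℝ) < 4*u^2*(1+u^2))]
    congr 1
    have h4log : Real.log (4*u^2*(1+u^2))
        = 2*Real.log 2 + 2*Real.log u + Real.log (1+u^2) := by
      rw [Real.log_mul (by positivity) (by positivity),
        Real.log_mul (by norm_num) (by positivity), hlogu2,
        show (4:ℝ) = 2^2 by norm_num, Real.log_pow]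
      push_cast
      ring
    rw [h4log]
    push_cast
    ring
  rw [hcoef, hcdef]
  have h2v : 2*v = Real.log (1+u^2) - Real.log 2 - Real.log u := by
    have h0 : Real.log s = 2*v := by rw [hs, Real.log_exp]
    rw [hse, Real.log_div (by positivity : (0:ℝ) < 1+u^2).ne' (by positivity : (0:ℝ) < 2*u).ne',
      Real.log_mul (by norm_num) hu0.ne'] at h0
    linarith
  have h2vC : 2*(v:ℂ) = ((Real.log (1+u^2) : ℝ):ℂ) - ((Real.log 2 : ℝ):ℂ) - ((Real.log u : ℝ):ℂ) := by
    exact_mod_cast h2v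
  rw [Complex.ofReal_sub, Complex.ofReal_exp, Complex.ofReal_exp, Complex.ofReal_exp, mul_sub]
  simp only [← Complex.exp_add]
  congr 1
  · congr 1
    push_cast
    rw [hμdef, hpdef]
    linear_combination ((3 - Complex.I*ω)/2) * h2vC
  · congr 1
    push_cast
    rw [hμdef, hqdef]
    linear_combination ((3 - Complex.I*ω)/2) * h2vC


lemma beta_Ioi {a b : ℂ} (ha : 0 < a.re) (hb : 0 < b.re) :
    IntegrableOn (fun x : ℝ => (x:ℂ)^(a-1) * ((1+x:ℝ):ℂ)^(-(a+b))) (Set.Ioi 0) ∧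
    ∫ x in Set.Ioi (0:ℝ), (x:ℂ)^(a-1) * ((1+x:ℝ):ℂ)^(-(a+b))
      = Complex.Gamma a * Complex.Gamma b / Complex.Gamma (a+b) := by
  set g : ℝ → ℂ := fun x => (x:ℂ)^(a-1) * ((1+x:ℝ):ℂ)^(-(a+b)) with hg
  set f : ℝ → ℝ := fun u => u / (1-u) with hf
  set f' : ℝ → ℝ := fun u => ((1-u)⁻¹)^2 with hf'
  have hderiv : ∀ u ∈ Set.Ioo (0:ℝ) 1, HasDerivWithinAt f (f' u) (Set.Ioo 0 1) u := by
    intro u hu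
    have h1 : (0:ℝ) < 1 - u := by linarith [hu.2]
    have hden : HasDerivAt (fun u : ℝ => 1 - u) (-1) u := by
      simpa using (hasDerivAt_id u).const_sub 1
    have h' : HasDerivAt f (f' u) u := by
      have := (hasDerivAt_id u).div hden h1.ne'
      simp only [id_eq] at this
      exact this.congr_deriv (by rw [hf']; field_simp; ring)
    exact h'.hasDerivWithinAt
  have hinj : Set.InjOn f (Set.Ioo 0 1) := by
    have key : ∀ u ∈ Set.Ioo (0:ℝ) 1, f u / (1 + f u) = u := by
      intro u hu
      have h1 : (0:ℝ) < 1 - u := by linarith [hu.2]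
      rw [hf]; field_simp; ring
    intro u1 h1 u2 h2 he
    rw [← key u1 h1, ← key u2 h2, he]
  have himg : f '' Set.Ioo 0 1 = Set.Ioi 0 := by
    ext x
    constructor
    · rintro ⟨u, hu, rfl⟩
      have h1 : (0:ℝ) < 1 - u := by linarith [hu.2]
      exact div_pos hu.1 h1
    · intro hx
      have hx' : (0:ℝ) < x := hx
      refine ⟨x / (1+x), ⟨div_pos hx' (by linarith), (div_lt_one (by linarith)).2 (by linarith)⟩, ?_⟩
      rw [hf]; field_simp; ring
  have hpt : ∀ u ∈ Set.Ioo (0:ℝ) 1,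
      |f' u| • g (f u) = (u:ℂ)^(a-1) * (1 - (u:ℂ))^(b-1) := by
    intro u hu
    have h0 : (0:ℝ) < u := hu.1
    have h1 : (0:ℝ) < 1 - u := by linarith [hu.2]
    have hfu : 0 < f u := div_pos h0 h1
    have h1f : 1 + f u = (1-u)⁻¹ := by rw [hf]; field_simp; ring
    have habs : |f' u| = ((1-u)⁻¹)^2 := abs_of_pos (by positivity)
    have hlogf : Real.log (f u) = Real.log u - Real.log (1-u) := by
      rw [hf]; exact Real.log_div h0.ne' h1.ne'
    have hcast : (1 - (u:ℂ)) = ((1-u : ℝ) : ℂ) := by push_cast; ring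
    have hgfu : g (f u) = ((f u : ℝ):ℂ)^(a-1) * ((1 + f u:ℝ):ℂ)^(-(a+b)) := rfl
    rw [habs, Complex.real_smul, hgfu, h1f, hcast]
    rw [cpowR hfu, cpowR (inv_pos.2 h1), cpowR h0, cpowR h1, hlogf, Real.log_inv]
    have hofr : (((((1-u)⁻¹)^2 : ℝ)) : ℂ) = Complex.exp (((-2) * Real.log (1-u) : ℝ) : ℂ) := by
      have : ((1-u)⁻¹)^2 = Real.exp ((-2) * Real.log (1-u)) := by
        rw [show (-2:ℝ) * Real.log (1-u) = Real.log (1-u) * (-2) by ring, ← Real.rpow_def_of_pos h1]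
        rw [show (-2:ℝ) = -(2:ℕ) by norm_num, Real.rpow_neg h1.le, Real.rpow_natCast]
        norm_num
      rw [this, Complex.ofReal_exp]
    rw [hofr, ← Complex.exp_add, ← Complex.exp_add, ← Complex.exp_add]
    congr 1
    push_cast
    ring
  constructor
  · rw [← himg, integrableOn_image_iff_integrableOn_abs_deriv_smul measurableSet_Ioo hderiv hinj g]
    have hbeta := (Complex.betaIntegral_convergent ha hb)
    have : IntegrableOn (fun u : ℝ => (u:ℂ)^(a-1) * (1 - (u:ℂ))^(b-1)) (Set.Ioo 0 1) := by
      exact ((intervalIntegrable_iff_integrableOn_Ioc_of_le zero_le_one).1 hbeta).mono_set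
        Set.Ioo_subset_Ioc_self
    exact this.congr_fun (fun u hu => (hpt u hu).symm) measurableSet_Ioo
  · rw [← himg, integral_image_eq_integral_abs_deriv_smul measurableSet_Ioo hderiv hinj g,
      setIntegral_congr_fun measurableSet_Ioo hpt]
    have h1 : ∫ u in Set.Ioo (0:ℝ) 1, (u:ℂ)^(a-1) * (1 - (u:ℂ))^(b-1)
        = Complex.betaIntegral a b := by
      rw [Complex.betaIntegral, intervalIntegral.integral_of_le zero_le_one,
        ← MeasureTheory.integral_Ioc_eq_integral_Ioo]
    rw [h1]
    have h2 := Complex.Gamma_mul_Gamma_eq_betaIntegral ha hb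
    have h3 : Complex.Gamma (a+b) ≠ 0 :=
      Complex.Gamma_ne_zero_of_re_pos (by rw [Complex.add_re]; linarith)
    field_simp [h2]
    rw [h2]; ring


lemma inv_step (μ c : ℂ) :
    ∫ u in Set.Ioo (0:ℝ) 1, (u:ℂ)^(μ - c - 2) * ((1+u:ℝ):ℂ)^(-μ)
      = ∫ x in Set.Ioi (1:ℝ), (x:ℂ)^c * ((1+x:ℝ):ℂ)^(-μ) := by
  set g : ℝ → ℂ := fun u => (u:ℂ)^(μ - c - 2) * ((1+u:ℝ):ℂ)^(-μ) with hg
  have hderiv : ∀ x ∈ Set.Ioi (1:ℝ), HasDerivWithinAt (fun x : ℝ => x⁻¹) (-(x^2)⁻¹) (Set.Ioi 1) x := by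
    intro x hx
    exact ((hasDerivAt_inv (by linarith [Set.mem_Ioi.1 hx] : x ≠ 0)).congr_deriv (by ring)).hasDerivWithinAt
  have hinj : Set.InjOn (fun x : ℝ => x⁻¹) (Set.Ioi 1) := inv_injective.injOn
  have himg : (fun x : ℝ => x⁻¹) '' Set.Ioi 1 = Set.Ioo 0 1 := by
    ext u
    constructor
    · rintro ⟨x, hx, rfl⟩
      have hx1 : (1:ℝ) < x := hx
      exact ⟨by positivity, inv_lt_one_of_one_lt₀ hx1⟩
    · intro hu
      exact ⟨u⁻¹, (Set.mem_Ioi).2 ((one_lt_inv₀ hu.1).2 hu.2), inv_inv u⟩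
  rw [← himg, integral_image_eq_integral_abs_deriv_smul measurableSet_Ioi hderiv hinj g]
  refine setIntegral_congr_fun measurableSet_Ioi (fun x hx => ?_)
  have hx1 : (1:ℝ) < x := hx
  have hx0 : (0:ℝ) < x := by linarith
  have habs : |(-(x^2)⁻¹ : ℝ)| = (x^2)⁻¹ := by
    rw [abs_neg, abs_of_pos (by positivity)]
  have hgx : g x⁻¹ = ((x⁻¹ : ℝ):ℂ)^(μ - c - 2) * ((1 + x⁻¹ : ℝ):ℂ)^(-μ) := rfl
  rw [habs, Complex.real_smul, hgx]
  have h1x : (1 + x⁻¹ : ℝ) = (1+x)/x := by field_simp; ring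
  have hofr : (((x^2)⁻¹ : ℝ) : ℂ) = Complex.exp (((-2) * Real.log x : ℝ) : ℂ) := by
    have : ((x^2)⁻¹ : ℝ) = Real.exp ((-2) * Real.log x) := by
      rw [show (-2:ℝ) * Real.log x = Real.log x * (-2) by ring, ← Real.rpow_def_of_pos hx0]
      rw [show (-2:ℝ) = -(2:ℕ) by norm_num, Real.rpow_neg hx0.le, Real.rpow_natCast]
    rw [this, Complex.ofReal_exp]
  rw [h1x, hofr, cpowR (inv_pos.2 hx0), cpowR (by positivity : (0:ℝ) < (1+x)/x),
    cpowR hx0, cpowR (by positivity : (0:ℝ) < 1+x),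
    Real.log_inv, Real.log_div (by positivity) hx0.ne']
  rw [← Complex.exp_add, ← Complex.exp_add, ← Complex.exp_add]
  congr 1
  push_cast
  ring


set_option maxHeartbeats 2000000 in
theorem fourier_laplace_rplus_profile (θ : ℝ) (hθ : θ ∈ Set.Ioo (0 : ℝ) (1 / 2))
    (ω : ℂ) (hω : 0 ≤ ω.im) :
    MeasureTheory.IntegrableOn
      (fun v : ℝ =>
        Complex.exp (Complex.I * ω * (v : ℂ)) * ((Real.exp (-3 * v) : ℝ) : ℂ) *
          (((Real.exp (2 * v) + Real.sqrt (Real.exp (4 * v) - 1)) ^ θ -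
              (Real.exp (2 * v) - Real.sqrt (Real.exp (4 * v) - 1)) ^ θ : ℝ) : ℂ))
      (Set.Ioi 0) ∧
    ∫ v in Set.Ioi (0 : ℝ),
        Complex.exp (Complex.I * ω * (v : ℂ)) * ((Real.exp (-3 * v) : ℝ) : ℂ) *
          (((Real.exp (2 * v) + Real.sqrt (Real.exp (4 * v) - 1)) ^ θ -
              (Real.exp (2 * v) - Real.sqrt (Real.exp (4 * v) - 1)) ^ θ : ℝ) : ℂ) =
      ((θ / Real.sqrt 2 : ℝ) : ℂ) *
        Complex.exp ((-(Complex.I * ω) / 2) * (Real.log 2 : ℂ)) *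
        Complex.Gamma ((3 + 2 * (θ : ℂ) - Complex.I * ω) / 4) *
        Complex.Gamma ((3 - 2 * (θ : ℂ) - Complex.I * ω) / 4) /
        Complex.Gamma ((5 - Complex.I * ω) / 2) := by
  obtain ⟨hθ0, hθh⟩ := hθ
  set μ : ℂ := (5 - Complex.I*ω)/2 with hμdef
  set q : ℂ := (3 + 2*(θ:ℂ) - Complex.I*ω)/4 with hqdef
  set p : ℂ := (3 - 2*(θ:ℂ) - Complex.I*ω)/4 with hpdef
  have hpre : 0 < p.re := by
    rw [hpdef, show (4:ℂ) = ((4:ℝ):ℂ) by norm_num, Complex.div_ofReal_re]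
    have h : ((3:ℂ) - 2*(θ:ℂ) - Complex.I*ω).re = 3 - 2*θ + ω.im := by
      simp [Complex.sub_re, Complex.mul_re]
    rw [h]; exact div_pos (by linarith) (by norm_num)
  have hqre : 0 < q.re := by
    rw [hqdef, show (4:ℂ) = ((4:ℝ):ℂ) by norm_num, Complex.div_ofReal_re]
    have h : ((3:ℂ) + 2*(θ:ℂ) - Complex.I*ω).re = 3 + 2*θ + ω.im := by
      simp [Complex.add_re, Complex.sub_re, Complex.mul_re]
    rw [h]; exact div_pos (by linarith) (by norm_num)
  have hμre : 0 < μ.re := by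
    rw [hμdef, show (2:ℂ) = ((2:ℝ):ℂ) by norm_num, Complex.div_ofReal_re]
    have h : ((5:ℂ) - Complex.I*ω).re = 5 + ω.im := by
      simp [Complex.sub_re, Complex.mul_re]
    rw [h]; exact div_pos (by linarith) (by norm_num)
  have hp1re : 0 < (p+1).re := by rw [Complex.add_re, Complex.one_re]; linarith
  have hq1re : 0 < (q+1).re := by rw [Complex.add_re, Complex.one_re]; linarith
  have hpq1 : p + (q+1) = μ := by rw [hpdef, hqdef, hμdef]; ring
  have hqp1 : q + (p+1) = μ := by rw [hpdef, hqdef, hμdef]; ring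
  have hp1q : (p+1) + q = μ := by rw [hpdef, hqdef, hμdef]; ring
  have hq1p : (q+1) + p = μ := by rw [hpdef, hqdef, hμdef]; ring
  have hB1 := beta_Ioi hpre hq1re
  simp only [hpq1] at hB1
  have hB2 := beta_Ioi hqre hp1re
  simp only [hqp1] at hB2
  have hB3 := beta_Ioi hp1re hqre
  simp only [hp1q, add_sub_cancel_right] at hB3
  have hB4 := beta_Ioi hq1re hpre
  simp only [hq1p, add_sub_cancel_right] at hB4
  have hsub1 : Set.Ioo (0:ℝ) 1 ⊆ Set.Ioi 0 := Set.Ioo_subset_Ioi_self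
  have i1 : IntegrableOn (fun x : ℝ => (x:ℂ)^(p-1) * ((1+x:ℝ):ℂ)^(-μ)) (Set.Ioo 0 1) :=
    hB1.1.mono_set hsub1
  have i2 : IntegrableOn (fun x : ℝ => (x:ℂ)^(q-1) * ((1+x:ℝ):ℂ)^(-μ)) (Set.Ioo 0 1) :=
    hB2.1.mono_set hsub1
  have i3 : IntegrableOn (fun x : ℝ => (x:ℂ)^p * ((1+x:ℝ):ℂ)^(-μ)) (Set.Ioo 0 1) :=
    hB3.1.mono_set hsub1
  have i4 : IntegrableOn (fun x : ℝ => (x:ℂ)^q * ((1+x:ℝ):ℂ)^(-μ)) (Set.Ioo 0 1) :=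
    hB4.1.mono_set hsub1
  have split : ∀ F : ℝ → ℂ, IntegrableOn F (Set.Ioi 0) →
      ∫ x in Set.Ioi (0:ℝ), F x = (∫ x in Set.Ioo (0:ℝ) 1, F x) + ∫ x in Set.Ioi (1:ℝ), F x := by
    intro F hF
    rw [← Set.Ioc_union_Ioi_eq_Ioi (zero_le_one : (0:ℝ) ≤ 1),
      setIntegral_union (Set.Ioc_disjoint_Ioi le_rfl) measurableSet_Ioi
        (hF.mono_set Set.Ioc_subset_Ioi_self) (hF.mono_set (Set.Ioi_subset_Ioi zero_le_one)),
      integral_Ioc_eq_integral_Ioo]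
  have hinv1 := inv_step μ (p-1)
  have e4 : μ - (p-1) - 2 = q := by rw [hpdef, hqdef, hμdef]; ring
  simp only [e4] at hinv1
  have hinv2 := inv_step μ (q-1)
  have e3 : μ - (q-1) - 2 = p := by rw [hpdef, hqdef, hμdef]; ring
  simp only [e3] at hinv2
  have hval1 : (∫ x in Set.Ioo (0:ℝ) 1, (x:ℂ)^(p-1) * ((1+x:ℝ):ℂ)^(-μ))
      + (∫ x in Set.Ioo (0:ℝ) 1, (x:ℂ)^q * ((1+x:ℝ):ℂ)^(-μ))
      = Complex.Gamma p * Complex.Gamma (q+1) / Complex.Gamma μ := by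
    rw [hinv1, ← split _ hB1.1, hB1.2]
  have hval2 : (∫ x in Set.Ioo (0:ℝ) 1, (x:ℂ)^(q-1) * ((1+x:ℝ):ℂ)^(-μ))
      + (∫ x in Set.Ioo (0:ℝ) 1, (x:ℂ)^p * ((1+x:ℝ):ℂ)^(-μ))
      = Complex.Gamma q * Complex.Gamma (p+1) / Complex.Gamma μ := by
    rw [hinv2, ← split _ hB2.1, hB2.2]
  set c : ℂ := Complex.exp ((μ - 3) * ((Real.log 2 : ℝ):ℂ)) with hcdef
  set G : ℝ → ℂ := fun w => c * ((w:ℂ)^(p-1) - (w:ℂ)^(q-1) - (w:ℂ)^p + (w:ℂ)^q)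
      * ((1 + w : ℝ):ℂ)^(-μ) with hGdef
  set φ : ℝ → ℝ := fun v => (Real.exp (2*v) - Real.sqrt (Real.exp (4*v) - 1))^2 with hφdef
  set D : ℝ → ℝ := fun v => 2*(Real.exp (2*v) - Real.sqrt (Real.exp (4*v) - 1))^1 *
      (Real.exp (2*v)*2 - Real.exp (4*v)*4/(2*Real.sqrt (Real.exp (4*v) - 1))) with hDdef
  have key : ∀ v ∈ Set.Ioi (0:ℝ), |D v| • G (φ v)
      = Complex.exp (Complex.I * ω * (v : ℂ)) * ((Real.exp (-3 * v) : ℝ) : ℂ) *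
          (((Real.exp (2 * v) + Real.sqrt (Real.exp (4 * v) - 1)) ^ θ -
              (Real.exp (2 * v) - Real.sqrt (Real.exp (4 * v) - 1)) ^ θ : ℝ) : ℂ) := by
    intro v hv
    simp only [hGdef, hDdef, hφdef]
    exact hpt_aux θ ω μ p q hμdef hpdef hqdef c hcdef v hv
  have hD : ∀ v ∈ Set.Ioi (0:ℝ), HasDerivAt φ (D v) v := by
    intro v hv
    have hv0 : (0:ℝ) < v := hv
    have h41 : 1 < Real.exp (4*v) := by
      have := Real.exp_lt_exp.2 (show (0:ℝ) < 4*v by linarith); simpa using this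
    have h2d : HasDerivAt (fun v : ℝ => 2*v) 2 v := by
      simpa using (hasDerivAt_id v).const_mul (2:ℝ)
    have h4d : HasDerivAt (fun v : ℝ => 4*v) 4 v := by
      simpa using (hasDerivAt_id v).const_mul (4:ℝ)
    have hsd : HasDerivAt (fun v : ℝ => Real.exp (2*v)) (Real.exp (2*v) * 2) v := h2d.exp
    have he4 : HasDerivAt (fun v : ℝ => Real.exp (4*v) - 1) (Real.exp (4*v) * 4) v := by
      simpa using h4d.exp.sub_const 1
    have hrd : HasDerivAt (fun v : ℝ => Real.sqrt (Real.exp (4*v) - 1))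
        ((Real.exp (4*v) * 4) / (2 * Real.sqrt (Real.exp (4*v) - 1))) v :=
      he4.sqrt (by linarith)
    have hpow := (hsd.sub hrd).pow 2
    simp only [hφdef, hDdef]
    exact hpow.congr_deriv (by norm_num)
  have hDneg : ∀ v ∈ Set.Ioi (0:ℝ), D v < 0 := by
    intro v hv
    have hv0 : (0:ℝ) < v := hv
    have h41 : 1 < Real.exp (4*v) := by
      have := Real.exp_lt_exp.2 (show (0:ℝ) < 4*v by linarith); simpa using this
    have hs1 : 1 < Real.exp (2*v) := by
      have := Real.exp_lt_exp.2 (show (0:ℝ) < 2*v by linarith); simpa using this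
    have h4 : Real.exp (4*v) = (Real.exp (2*v))^2 := by
      rw [sq, ← Real.exp_add]; congr 1; ring
    have hr0 : 0 < Real.sqrt (Real.exp (4*v) - 1) := Real.sqrt_pos.2 (by linarith)
    have hr2 : (Real.sqrt (Real.exp (4*v) - 1))^2 = Real.exp (4*v) - 1 :=
      Real.sq_sqrt (by linarith)
    have hru : Real.sqrt (Real.exp (4*v) - 1) < Real.exp (2*v) := by nlinarith
    have hneg : Real.exp (2*v)*2 - Real.exp (4*v)*4/(2*Real.sqrt (Real.exp (4*v) - 1)) < 0 := by
      rw [sub_neg, lt_div_iff₀ (by positivity)]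
      nlinarith
    simp only [hDdef]
    exact mul_neg_of_pos_of_neg (by rw [pow_one]; nlinarith) hneg
  have hcont : ContinuousOn φ (Set.Ioi 0) := by
    simp only [hφdef]; fun_prop
  have hanti : StrictAntiOn φ (Set.Ioi 0) := by
    refine strictAntiOn_of_deriv_neg (convex_Ioi 0) hcont ?_
    intro x hx
    rw [interior_Ioi] at hx
    rw [(hD x hx).deriv]
    exact hDneg x hx
  have hinj : Set.InjOn φ (Set.Ioi 0) := hanti.injOn
  have himg : φ '' Set.Ioi 0 = Set.Ioo 0 1 := by
    ext w
    constructor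
    · rintro ⟨v, hv, rfl⟩
      have hv0 : (0:ℝ) < v := hv
      have h41 : 1 < Real.exp (4*v) := by
        have := Real.exp_lt_exp.2 (show (0:ℝ) < 4*v by linarith); simpa using this
      have hs1 : 1 < Real.exp (2*v) := by
        have := Real.exp_lt_exp.2 (show (0:ℝ) < 2*v by linarith); simpa using this
      have h4 : Real.exp (4*v) = (Real.exp (2*v))^2 := by
        rw [sq, ← Real.exp_add]; congr 1; ring
      have hr0 : 0 < Real.sqrt (Real.exp (4*v) - 1) := Real.sqrt_pos.2 (by linarith)
      have hr2 : (Real.sqrt (Real.exp (4*v) - 1))^2 = Real.exp (4*v) - 1 :=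
        Real.sq_sqrt (by linarith)
      have hru : Real.sqrt (Real.exp (4*v) - 1) < Real.exp (2*v) := by nlinarith
      have hprod : (Real.exp (2*v) - Real.sqrt (Real.exp (4*v) - 1))
          * (Real.exp (2*v) + Real.sqrt (Real.exp (4*v) - 1)) = 1 := by nlinarith
      constructor
      · simp only [hφdef]
        have : 0 < Real.exp (2*v) - Real.sqrt (Real.exp (4*v) - 1) := by linarith
        positivity
      · simp only [hφdef]
        nlinarith [hprod, hr0, hs1, hru]
    · rintro ⟨hw0, hw1⟩
      have hsw : 0 < Real.sqrt w := Real.sqrt_pos.2 hw0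
      have hsqw : (Real.sqrt w)^2 = w := Real.sq_sqrt hw0.le
      have hsw1 : Real.sqrt w < 1 := by nlinarith
      refine ⟨Real.log ((1+w)/(2*Real.sqrt w))/2, ?_, ?_⟩
      · have harg : 1 < (1+w)/(2*Real.sqrt w) := by
          rw [lt_div_iff₀ (by positivity)]
          nlinarith [sq_nonneg (1 - Real.sqrt w)]
        have := Real.log_pos harg
        simp only [Set.mem_Ioi]
        linarith
      · have hexp2 : Real.exp (2*(Real.log ((1+w)/(2*Real.sqrt w))/2)) = (1+w)/(2*Real.sqrt w) := by
          rw [show 2*(Real.log ((1+w)/(2*Real.sqrt w))/2) = Real.log ((1+w)/(2*Real.sqrt w)) by ring,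
            Real.exp_log (by positivity)]
        have hexp4 : Real.exp (4*(Real.log ((1+w)/(2*Real.sqrt w))/2)) = ((1+w)/(2*Real.sqrt w))^2 := by
          rw [show (4:ℝ)*(Real.log ((1+w)/(2*Real.sqrt w))/2)
              = 2*(Real.log ((1+w)/(2*Real.sqrt w))/2) + 2*(Real.log ((1+w)/(2*Real.sqrt w))/2) by ring,
            Real.exp_add, hexp2, sq]
        have hsq : Real.sqrt (Real.exp (4*(Real.log ((1+w)/(2*Real.sqrt w))/2)) - 1)
            = (1-w)/(2*Real.sqrt w) := by
          have h2s : (2*Real.sqrt w)^2 = 4*w := by rw [mul_pow, hsqw]; ring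
          rw [hexp4, show ((1+w)/(2*Real.sqrt w))^2 - 1 = ((1-w)/(2*Real.sqrt w))^2 by
              rw [div_pow, div_pow, h2s]
              field_simp
              ring]
          exact Real.sqrt_sq (div_nonneg (by linarith) (by positivity))
        simp only [hφdef]
        rw [hexp2, hsq, div_sub_div_same]
        rw [show (1+w - (1-w)) = 2*w by ring]
        rw [div_pow]
        rw [show (2*w)^2 = 4*w^2 by ring, show (2*Real.sqrt w)^2 = 4*(Real.sqrt w)^2 by ring, hsqw]
        field_simp
  refine ⟨?_, ?_⟩
  · have hIff := integrableOn_image_iff_integrableOn_abs_deriv_smul measurableSet_Ioi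
      (fun v hv => (hD v hv).hasDerivWithinAt) hinj G
    rw [himg] at hIff
    have hGint : IntegrableOn G (Set.Ioo 0 1) := by
      have j1 : Integrable (fun x : ℝ => c * ((x:ℂ)^(p-1) * ((1+x:ℝ):ℂ)^(-μ)))
          (volume.restrict (Set.Ioo 0 1)) := i1.const_mul c
      have j2 : Integrable (fun x : ℝ => c * ((x:ℂ)^(q-1) * ((1+x:ℝ):ℂ)^(-μ)))
          (volume.restrict (Set.Ioo 0 1)) := i2.const_mul c
      have j3 : Integrable (fun x : ℝ => c * ((x:ℂ)^p * ((1+x:ℝ):ℂ)^(-μ)))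
          (volume.restrict (Set.Ioo 0 1)) := i3.const_mul c
      have j4 : Integrable (fun x : ℝ => c * ((x:ℂ)^q * ((1+x:ℝ):ℂ)^(-μ)))
          (volume.restrict (Set.Ioo 0 1)) := i4.const_mul c
      have comb : IntegrableOn (fun x : ℝ =>
          c * ((x:ℂ)^(p-1) * ((1+x:ℝ):ℂ)^(-μ)) - c * ((x:ℂ)^(q-1) * ((1+x:ℝ):ℂ)^(-μ))
            - c * ((x:ℂ)^p * ((1+x:ℝ):ℂ)^(-μ)) + c * ((x:ℂ)^q * ((1+x:ℝ):ℂ)^(-μ)))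
          (Set.Ioo 0 1) :=
        ((j1.sub j2).sub j3).add j4
      exact comb.congr_fun (fun x hx => by simp only [hGdef]; ring) measurableSet_Ioo
    exact (hIff.1 hGint).congr_fun key measurableSet_Ioi
  · rw [← setIntegral_congr_fun measurableSet_Ioi key,
      ← integral_image_eq_integral_abs_deriv_smul measurableSet_Ioi
        (fun v hv => (hD v hv).hasDerivWithinAt) hinj G, himg]
    have e : ∫ w in Set.Ioo (0:ℝ) 1, G w = ∫ x in Set.Ioo (0:ℝ) 1,
        (c * ((x:ℂ)^(p-1) * ((1+x:ℝ):ℂ)^(-μ)) - c * ((x:ℂ)^(q-1) * ((1+x:ℝ):ℂ)^(-μ))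
          - c * ((x:ℂ)^p * ((1+x:ℝ):ℂ)^(-μ)) + c * ((x:ℂ)^q * ((1+x:ℝ):ℂ)^(-μ))) :=
      setIntegral_congr_fun measurableSet_Ioo (fun x hx => by simp only [hGdef]; ring)
    have j1 : Integrable (fun x : ℝ => c * ((x:ℂ)^(p-1) * ((1+x:ℝ):ℂ)^(-μ)))
        (volume.restrict (Set.Ioo 0 1)) := i1.const_mul c
    have j2 : Integrable (fun x : ℝ => c * ((x:ℂ)^(q-1) * ((1+x:ℝ):ℂ)^(-μ)))
        (volume.restrict (Set.Ioo 0 1)) := i2.const_mul c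
    have j3 : Integrable (fun x : ℝ => c * ((x:ℂ)^p * ((1+x:ℝ):ℂ)^(-μ)))
        (volume.restrict (Set.Ioo 0 1)) := i3.const_mul c
    have j4 : Integrable (fun x : ℝ => c * ((x:ℂ)^q * ((1+x:ℝ):ℂ)^(-μ)))
        (volume.restrict (Set.Ioo 0 1)) := i4.const_mul c
    have j12 : Integrable (fun x : ℝ => c * ((x:ℂ)^(p-1) * ((1+x:ℝ):ℂ)^(-μ))
        - c * ((x:ℂ)^(q-1) * ((1+x:ℝ):ℂ)^(-μ))) (volume.restrict (Set.Ioo 0 1)) := j1.sub j2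
    have j123 : Integrable (fun x : ℝ => c * ((x:ℂ)^(p-1) * ((1+x:ℝ):ℂ)^(-μ))
        - c * ((x:ℂ)^(q-1) * ((1+x:ℝ):ℂ)^(-μ)) - c * ((x:ℂ)^p * ((1+x:ℝ):ℂ)^(-μ)))
        (volume.restrict (Set.Ioo 0 1)) := j12.sub j3
    rw [e, integral_add j123 j4, integral_sub j12 j3, integral_sub j1 j2,
      integral_const_mul, integral_const_mul, integral_const_mul, integral_const_mul]
    have hqne : q ≠ 0 := by
      intro h; rw [h] at hqre; simp at hqre
    have hpne : p ≠ 0 := by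
      intro h; rw [h] at hpre; simp at hpre
    have hΓμ : Complex.Gamma μ ≠ 0 := Complex.Gamma_ne_zero_of_re_pos hμre
    have hhalf : Complex.exp (((-1/2 : ℂ)) * ((Real.log 2 : ℝ):ℂ)) = (((Real.sqrt 2)⁻¹ : ℝ) : ℂ) := by
      have hsq2 : Real.exp (Real.log 2 / 2) ^ 2 = 2 := by
        rw [sq, ← Real.exp_add, show Real.log 2 / 2 + Real.log 2 / 2 = Real.log 2 by ring,
          Real.exp_log (by norm_num : (0:ℝ) < 2)]
      have h2 : Real.sqrt 2 = Real.exp (Real.log 2 / 2) := by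
        conv_lhs => rw [← hsq2]
        exact Real.sqrt_sq (Real.exp_pos _).le
      rw [h2, ← Real.exp_neg, Complex.ofReal_exp]
      congr 1
      push_cast
      ring
    have hcsplit : c = Complex.exp ((-(Complex.I*ω)/2) * ((Real.log 2 : ℝ):ℂ))
        * (((Real.sqrt 2)⁻¹ : ℝ) : ℂ) := by
      rw [hcdef, show (μ - 3) * ((Real.log 2 : ℝ):ℂ)
          = (-(Complex.I*ω)/2) * ((Real.log 2:ℝ):ℂ) + (-1/2 : ℂ) * ((Real.log 2:ℝ):ℂ) by
            rw [hμdef]; ring,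
        Complex.exp_add, hhalf]
    have hθC : (θ:ℂ) = q - p := by rw [hpdef, hqdef]; ring
    have hs2ne : ((Real.sqrt 2 : ℝ):ℂ) ≠ 0 := by
      exact_mod_cast (Real.sqrt_pos.2 (by norm_num : (0:ℝ) < 2)).ne'
    rw [eq_div_iff hΓμ] at hval1 hval2
    rw [Complex.Gamma_add_one q hqne] at hval1
    rw [Complex.Gamma_add_one p hpne] at hval2
    rw [hcsplit, Complex.ofReal_inv, Complex.ofReal_div, eq_div_iff hΓμ]
    linear_combination
      (Complex.exp ((-(Complex.I*ω)/2) * ((Real.log 2 : ℝ):ℂ)) * (((Real.sqrt 2 : ℝ):ℂ))⁻¹) * hval1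
      - (Complex.exp ((-(Complex.I*ω)/2) * ((Real.log 2 : ℝ):ℂ)) * (((Real.sqrt 2 : ℝ):ℂ))⁻¹) * hval2
      - (Complex.exp ((-(Complex.I*ω)/2) * ((Real.log 2 : ℝ):ℂ)) * (((Real.sqrt 2 : ℝ):ℂ))⁻¹
          * Complex.Gamma p * Complex.Gamma q) * hθC
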